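/- The function h₁(t) = (log(1+t))^2 / log(1+t^2) is strictly decreasing on the interval (0,1). -/

import Mathlib

open Real Set

private lemma log_lt_self' {t : ℝ} (ht : 0 < t) : Real.log (1 + t) < t := by
  have := Real.log_lt_sub_one_of_pos (by linarith : (0:ℝ) < 1 + t) (by linarith)
  linarith

private lemma G_mono :
    StrictMonoOn (fun t : ℝ => (1 + t) * Real.log (1 + t) / t) (Set.Ioi 0) := by
  apply strictMonoOn_of_deriv_pos (convex_Ioi 0)
  · apply ContinuousOn.div
    · exact (continuousOn_const.add continuousOn_id).mul
        ((continuousOn_const.add continuousOn_id).log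
          (fun x hx => by have : (0:ℝ) < x := hx; simp only [Pi.add_apply, id]; positivity))
    · exact continuousOn_id
    · intro x hx; exact ne_of_gt hx
  · intro x hx
    rw [interior_Ioi] at hx
    have hx0 : (0:ℝ) < x := hx
    have h1x : (0:ℝ) < 1 + x := by linarith
    have h1 : HasDerivAt (fun t : ℝ => 1 + t) 1 x := (hasDerivAt_id x).const_add 1
    have h2 : HasDerivAt (fun t : ℝ => Real.log (1 + t)) (1 / (1 + x)) x := h1.log (ne_of_gt h1x)
    have h3 : HasDerivAt (fun t : ℝ => (1 + t) * Real.log (1 + t))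
        (1 * Real.log (1 + x) + (1 + x) * (1 / (1 + x))) x := h1.mul h2
    have h4 : HasDerivAt (fun t : ℝ => (1 + t) * Real.log (1 + t) / t)
        (((1 * Real.log (1 + x) + (1 + x) * (1 / (1 + x))) * x -
          (1 + x) * Real.log (1 + x) * 1) / x ^ 2) x :=
      h3.div (hasDerivAt_id x) (ne_of_gt hx0)
    rw [h4.deriv]
    have hlt := log_lt_self' hx0
    have hnum : (1 * Real.log (1 + x) + (1 + x) * (1 / (1 + x))) * x -
        (1 + x) * Real.log (1 + x) * 1 = x - Real.log (1 + x) := by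
      field_simp; ring
    rw [hnum]
    exact div_pos (by linarith) (by positivity)

private lemma key {t : ℝ} (ht : t ∈ Set.Ioo (0:ℝ) 1) :
    (1 + t ^ 2) * Real.log (1 + t ^ 2) < t * (1 + t) * Real.log (1 + t) := by
  obtain ⟨ht0, ht1⟩ := ht
  have hsq : t ^ 2 < t := by nlinarith
  have h := G_mono (Set.mem_Ioi.mpr (by positivity)) (ht0 : t ∈ Set.Ioi (0:ℝ)) hsq
  simp only at h
  rw [div_lt_div_iff₀ (by positivity) ht0] at h
  nlinarith

theorem h1_strictAntiOn :
    StrictAntiOn (fun t : ℝ => (Real.log (1 + t)) ^ 2 / Real.log (1 + t ^ 2))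
      (Set.Ioo 0 1) := by
  apply strictAntiOn_of_deriv_neg (convex_Ioo 0 1)
  · apply ContinuousOn.div
    · exact ((continuousOn_const.add continuousOn_id).log
        (fun x hx => by have : (0:ℝ) < x := hx.1; simp only [Pi.add_apply, id]; positivity)).pow 2
    · exact (continuousOn_const.add (continuousOn_pow 2)).log
        (fun x hx => by have : (0:ℝ) < x := hx.1; simp only [Pi.add_apply, id]; positivity)
    · intro x hx
      exact ne_of_gt (Real.log_pos (by nlinarith [hx.1, sq_nonneg x] ))
  · intro x hx
    rw [interior_Ioo] at hx
    obtain ⟨hx0, hx1⟩ := hx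
    have h1x : (0:ℝ) < 1 + x := by linarith
    have h1x2 : (0:ℝ) < 1 + x ^ 2 := by positivity
    have hL1 : 0 < Real.log (1 + x) := Real.log_pos (by linarith)
    have hL2 : 0 < Real.log (1 + x ^ 2) := Real.log_pos (by nlinarith)
    have h1 : HasDerivAt (fun t : ℝ => 1 + t) 1 x := (hasDerivAt_id x).const_add 1
    have h2 : HasDerivAt (fun t : ℝ => Real.log (1 + t)) (1 / (1 + x)) x := h1.log (ne_of_gt h1x)
    have hf : HasDerivAt (fun t : ℝ => (Real.log (1 + t)) ^ 2)
        ((2 : ℕ) * Real.log (1 + x) ^ 1 * (1 / (1 + x))) x := h2.pow 2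
    have hg0 : HasDerivAt (fun t : ℝ => 1 + t ^ 2) ((2 : ℕ) * x ^ 1) x :=
      (hasDerivAt_pow 2 x).const_add 1
    have hg : HasDerivAt (fun t : ℝ => Real.log (1 + t ^ 2))
        (((2 : ℕ) * x ^ 1) / (1 + x ^ 2)) x := hg0.log (ne_of_gt h1x2)
    have hdiv : HasDerivAt (fun t : ℝ => (Real.log (1 + t)) ^ 2 / Real.log (1 + t ^ 2)) _ x :=
      hf.div hg (ne_of_gt hL2)
    rw [hdiv.deriv]
    apply div_neg_of_neg_of_pos
    · have hk := key ⟨hx0, hx1⟩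
      have h5 : 2 * Real.log (1 + x) * Real.log (1 + x ^ 2) * (1 + x ^ 2) <
          2 * Real.log (1 + x) ^ 2 * x * (1 + x) := by
        nlinarith [mul_lt_mul_of_pos_left hk (by positivity : (0:ℝ) < 2 * Real.log (1 + x))]
      have e1 : ((2 : ℕ) : ℝ) * Real.log (1 + x) ^ 1 * (1 / (1 + x)) * Real.log (1 + x ^ 2) =
          (2 * Real.log (1 + x) * Real.log (1 + x ^ 2)) / (1 + x) := by push_cast; ring
      have e2 : Real.log (1 + x) ^ 2 * (((2 : ℕ) : ℝ) * x ^ 1 / (1 + x ^ 2)) =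
          (2 * Real.log (1 + x) ^ 2 * x) / (1 + x ^ 2) := by push_cast; ring
      rw [sub_neg, e1, e2, div_lt_div_iff₀ h1x h1x2]
      linarith [h5]
    · positivity
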